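/- Let A be a finite abelian group and σ an automorphism of A. Every finite-dimensional complex irreducible representation of G = ℤ ⋉ A has dimension equal to the size of the σ-orbit of some character of A; in particular its dimension divides the order of σ (if σ has finite order). -/

import Mathlib

open SemidirectProduct

/-- A representation is irreducible: nontrivial and no proper nonzero invariant subspace. -/
def IsIrrep {k G V : Type*} [CommRing k] [Group G] [AddCommGroup V] [Module k V]
    (ρ : Representation k G V) : Prop :=
  Nontrivial V ∧ ∀ W : Submodule k V, (∀ g, ∀ v ∈ W, ρ g v ∈ W) → W = ⊥ ∨ W = ⊤

/-- The simultaneous eigenspace `V_χ` for a character `χ` of an abelian group. -/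
def charSpace {A V : Type*} [CommGroup A] [AddCommGroup V] [Module ℂ V]
    (ρ : Representation ℂ A V) (χ : A →* ℂˣ) : Submodule ℂ V where
  carrier := {v | ∀ a, ρ a v = (χ a : ℂ) • v}
  add_mem' := by intro x y hx hy a; simp [hx a, hy a, smul_add]
  zero_mem' := by intro a; simp
  smul_mem' := by intro c x hx a; simp [hx a, smul_comm c]


lemma mem_charSpace_iff {A V : Type*} [CommGroup A] [AddCommGroup V] [Module ℂ V]
    (ρ : Representation ℂ A V) (χ : A →* ℂˣ) (v : V) :
    v ∈ charSpace ρ χ ↔ ∀ a, ρ a v = (χ a : ℂ) • v := Iff.rfl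

section Aux
variable {A V : Type*} [CommGroup A] [AddCommGroup V] [Module ℂ V]
  (ρA : Representation ℂ A V)

lemma charSpace_le_iInf (χ : A →* ℂˣ) :
    charSpace ρA χ ≤ ⨅ a, Module.End.maxGenEigenspace (ρA a) ((χ a : ℂ)) := by
  intro v hv
  rw [Module.End.mem_iInf_maxGenEigenspace_iff]
  intro a
  refine ⟨1, ?_⟩
  simp [pow_one, LinearMap.sub_apply, hv a]

lemma charSpace_linearIndependent {ι : Type*} (χ : ι → (A →* ℂˣ))
    (hinj : Function.Injective χ) (v : ι → V) (hv : ∀ i, v i ∈ charSpace ρA (χ i))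
    (h0 : ∀ i, v i ≠ 0) : LinearIndependent ℂ v := by
  have hcomm : ∀ a b : A, Commute (ρA a : Module.End ℂ V) (ρA b) := by
    intro a b
    simpa [Commute, SemiconjBy, ← map_mul] using congrArg ρA (mul_comm a b)
  have hind : iSupIndep fun μ : A → ℂ =>
      ⨅ a, Module.End.maxGenEigenspace (ρA a) (μ a) :=
    Module.End.independent_iInf_maxGenEigenspace_of_forall_mapsTo (fun a => (ρA a : Module.End ℂ V))
      (fun i j φ => Module.End.mapsTo_maxGenEigenspace_of_comm ((hcomm j i)) φ)
  have hginj : Function.Injective (fun i => fun a => ((χ i a : ℂ)) : ι → A → ℂ) := by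
    intro i j h
    apply hinj
    ext a
    exact congrFun h a
  exact (hind.comp hginj).linearIndependent _
    (fun i => charSpace_le_iInf ρA (χ i) (hv i)) h0

lemma exists_charSpace_ne_bot [Fintype A] [FiniteDimensional ℂ V] [Nontrivial V] :
    ∃ (χ : A →* ℂˣ) (v : V), v ≠ 0 ∧ v ∈ charSpace ρA χ := by
  classical
  set f : A → Module.End ℂ V := fun a => ρA a with hf
  have hsemi : ∀ a, (f a).IsFinitelySemisimple := by
    intro a
    refine (Module.End.isSemisimple_of_squarefree_aeval_eq_zero
      (p := Polynomial.X ^ (Fintype.card A) - 1) ?_ ?_).isFinitelySemisimple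
    · exact (Polynomial.X_pow_sub_one_separable_iff.mpr
        (by exact_mod_cast Nat.cast_ne_zero.mpr Fintype.card_ne_zero)).squarefree
    · simp only [map_sub, map_pow, Polynomial.aeval_X, Polynomial.aeval_one]
      rw [← map_pow, pow_card_eq_one]
      simp [hf]
  have hsup : ⨆ μ : A → ℂ, ⨅ a, (f a).maxGenEigenspace (μ a) = ⊤ :=
    Module.End.iSup_iInf_maxGenEigenspace_eq_top_of_iSup_maxGenEigenspace_eq_top_of_commute f
      (fun a b _ => by
        simpa [Commute, SemiconjBy, hf, ← map_mul] using congrArg ρA (mul_comm a b))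
      (fun a => Module.End.iSup_maxGenEigenspace_eq_top _)
  have hex : ∃ μ : A → ℂ, (⨅ a, (f a).maxGenEigenspace (μ a)) ≠ ⊥ := by
    by_contra h
    push_neg at h
    rw [iSup_congr h] at hsup
    simp at hsup
  obtain ⟨μ, hμ⟩ := hex
  obtain ⟨v, hvmem, hv0⟩ := Submodule.exists_mem_ne_zero_of_ne_bot hμ
  have hv : ∀ a, ρA a v = μ a • v := by
    intro a
    have hmem : v ∈ Module.End.eigenspace (f a) (μ a) := by
      have h1 := (iInf_le (fun a => (f a).maxGenEigenspace (μ a)) a) hvmem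
      rwa [(hsemi a).maxGenEigenspace_eq_eigenspace] at h1
    exact Module.End.mem_eigenspace_iff.mp hmem
  -- μ is multiplicative
  have key : ∀ c d : ℂ, c • v = d • v → c = d := by
    intro c d hcd
    have hz : (c - d) • v = 0 := by rw [sub_smul, hcd, sub_self]
    rcases smul_eq_zero.mp hz with h | h
    · exact sub_eq_zero.mp h
    · exact absurd h hv0
  have hone : μ 1 = 1 := by
    apply key
    rw [one_smul, ← hv 1, map_one]
    rfl
  have hmul : ∀ a b, μ (a * b) = μ a * μ b := by
    intro a b
    apply key
    rw [← hv (a * b), map_mul]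
    show (ρA a) ((ρA b) v) = _
    rw [hv b, map_smul, hv a, smul_smul, mul_comm]
  let χm : A →* ℂ := { toFun := μ, map_one' := hone, map_mul' := hmul }
  refine ⟨χm.toHomUnits, v, hv0, ?_⟩
  intro a
  rw [MonoidHom.coe_toHomUnits]
  exact hv a

end Aux

set_option maxHeartbeats 1000000 in
/-- The dimension of any finite-dimensional complex irreducible representation of `ℤ ⋉ A`
equals the size of the `σ`-orbit of some character of `A` occurring in it; in particular,
if `σ` has finite order, the dimension divides the order of `σ`. -/
theorem stmt3 {A V : Type} [CommGroup A] [Fintype A] [AddCommGroup V] [Module ℂ V]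
    [FiniteDimensional ℂ V] (σ : MulAut A)
    (ρ : Representation ℂ (A ⋊[zpowersHom (MulAut A) σ] Multiplicative ℤ) V)
    (hirr : IsIrrep ρ) :
    (∃ χ : A →* ℂˣ, charSpace (ρ.comp inl) χ ≠ ⊥ ∧
        Module.finrank ℂ V =
          Nat.card {χ' : A →* ℂˣ | ∃ k : ℤ, χ' = χ.comp (σ ^ k).toMonoidHom}) ∧
    (IsOfFinOrder σ → Module.finrank ℂ V ∣ orderOf σ) := by
  classical
  obtain ⟨hnt, hsub⟩ := hirr
  haveI := hnt
  set ρA : Representation ℂ A V := ρ.comp inl with hρA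
  -- the "translation" elements
  set e : ℤ → (A ⋊[zpowersHom (MulAut A) σ] Multiplicative ℤ) :=
    fun t => inr (Multiplicative.ofAdd t) with he
  have he_mul : ∀ s t : ℤ, e s * e t = e (s + t) := by
    intro s t
    rw [he]
    rw [← map_mul]
    rfl
  have he0 : e 0 = 1 := by rw [he]; simp
  have hswap : ∀ (t : ℤ) (a : A), inl a * e t = e t * inl ((σ ^ (-t)) a) := by
    intro t a
    have h2 : ((zpowersHom (MulAut A) σ) (Multiplicative.ofAdd t)) ((σ ^ (-t)) a) = a := by
      rw [zpowersHom_apply, toAdd_ofAdd, ← MulAut.mul_apply, ← zpow_add]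
      simp
    have h1 := inl_aut (φ := zpowersHom (MulAut A) σ) (Multiplicative.ofAdd t) ((σ ^ (-t)) a)
    rw [h2] at h1
    show inl a * e t = e t * inl ((σ ^ (-t)) a)
    simp only [he]
    rw [h1, mul_assoc, ← map_mul, inv_mul_cancel, map_one, mul_one]
  have hmap : ∀ (t : ℤ) (χ' : A →* ℂˣ) (w : V), w ∈ charSpace ρA χ' →
      ρ (e t) w ∈ charSpace ρA (χ'.comp (σ ^ (-t)).toMonoidHom) := by
    intro t χ' w hw a
    have h1 : ρA a (ρ (e t) w) = ρ (e t) (ρA ((σ ^ (-t)) a) w) := by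
      show (ρ (inl a) * ρ (e t)) w = (ρ (e t) * ρ (inl ((σ ^ (-t)) a))) w
      rw [← map_mul, ← map_mul, hswap]
    rw [h1, hw ((σ ^ (-t)) a), map_smul]
    rfl
  -- get a character
  obtain ⟨χ, v, hv0, hvχ⟩ := exists_charSpace_ne_bot ρA
  set c : ℤ → (A →* ℂˣ) := fun k => χ.comp (σ ^ k).toMonoidHom with hc
  have hc0 : c 0 = χ := by ext a; simp [hc]
  have hcc : ∀ j k : ℤ, (c j).comp (σ ^ k).toMonoidHom = c (j + k) := by
    intro j k
    ext a
    show ((χ ((σ ^ j) ((σ ^ k) a)) : ℂˣ) : ℂ) = ((χ ((σ ^ (j + k)) a) : ℂˣ) : ℂ)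
    rw [zpow_add]
    rfl
  haveI : Finite (MulAut A) := inferInstance
  set n := orderOf σ with hn
  have hn0 : 0 < n := orderOf_pos σ
  have hcn : c (n : ℤ) = χ := by
    ext a
    show ((χ ((σ ^ (n : ℤ)) a) : ℂˣ) : ℂ) = _
    rw [zpow_natCast, pow_orderOf_eq_one]
    rfl
  -- minimal positive period
  have hex : ∃ k : ℕ, c (k : ℤ) = χ ∧ 0 < k := ⟨n, hcn, hn0⟩
  set m := Nat.find hex with hm
  obtain ⟨hcm, hm0⟩ := Nat.find_spec hex
  have hadd : ∀ j k : ℤ, c j = χ → c k = χ → c (j + k) = χ := by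
    intro j k hj hk
    rw [← hcc j k, hj]
    exact hk
  have hneg : ∀ j : ℤ, c j = χ → c (-j) = χ := by
    intro j hj
    have h1 : c (-j) = (c j).comp (σ ^ (-j)).toMonoidHom := by rw [hj]
    rw [h1, hcc, add_neg_cancel, hc0]
  have hdvd_imp : ∀ j : ℤ, (m : ℤ) ∣ j → c j = χ := by
    have hmul : ∀ q : ℤ, c ((m : ℤ) * q) = χ := by
      intro q
      induction q using Int.induction_on with
      | zero => simpa using hc0
      | succ i ih =>
        have h : (m : ℤ) * (i + 1) = (m : ℤ) * i + m := by ring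
        rw [h]
        exact hadd _ _ ih hcm
      | pred i ih =>
        have h : (m : ℤ) * (-i - 1) = (m : ℤ) * (-i) + (-(m : ℤ)) := by ring
        rw [h]
        exact hadd _ _ ih (hneg _ hcm)
    rintro j ⟨q, rfl⟩
    exact hmul q
  have hdvd_rev : ∀ j : ℤ, c j = χ → (m : ℤ) ∣ j := by
    intro j hj
    have hr0 : 0 ≤ j % (m : ℤ) := Int.emod_nonneg j (by exact_mod_cast hm0.ne')
    have hrlt : j % (m : ℤ) < m := Int.emod_lt_of_pos j (by exact_mod_cast hm0)
    have hcr : c (j % (m : ℤ)) = χ := by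
      have h1 : j % (m : ℤ) = j + (-((m : ℤ) * (j / (m : ℤ)))) := by
        rw [Int.emod_def]; ring
      rw [h1]
      exact hadd _ _ hj (hneg _ (hdvd_imp _ ⟨_, rfl⟩))
    by_contra hnd
    have hrne : j % (m : ℤ) ≠ 0 := by
      intro h0
      exact hnd (Int.dvd_of_emod_eq_zero h0)
    have hlt : (j % (m : ℤ)).toNat < m := by omega
    have hpos : 0 < (j % (m : ℤ)).toNat := by omega
    exact Nat.find_min hex hlt ⟨by rw [Int.toNat_of_nonneg hr0]; exact hcr, hpos⟩
  have hcinj : ∀ j k : ℤ, c j = c k ↔ (m : ℤ) ∣ (j - k) := by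
    intro j k
    constructor
    · intro h
      apply hdvd_rev
      have h1 : c (j + -k) = χ := by
        rw [← hcc, h, hcc, add_neg_cancel, hc0]
      rwa [← sub_eq_add_neg] at h1
    · intro h
      have h1 : c (j - k) = χ := hdvd_imp _ h
      have h2 : c j = (c (j - k)).comp (σ ^ k).toMonoidHom := by
        rw [hcc, sub_add_cancel]
      rw [h2, h1]
  have hmdvdn : m ∣ n := by exact_mod_cast hdvd_rev (n : ℤ) hcn
  -- cardinality of the orbit
  have hcard : Nat.card {χ' : A →* ℂˣ | ∃ k : ℤ, χ' = c k} = m := by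
    have hb : Function.Bijective
        (fun i : Fin m => (⟨c ((i : ℕ) : ℤ), ⟨((i : ℕ) : ℤ), rfl⟩⟩ :
          {χ' : A →* ℂˣ | ∃ k : ℤ, χ' = c k})) := by
      constructor
      · intro i j hij
        have h1 : c ((i : ℕ) : ℤ) = c ((j : ℕ) : ℤ) := congrArg Subtype.val hij
        have h2 := (hcinj _ _).mp h1
        obtain ⟨q, hq⟩ := h2
        have hib : ((i : ℕ) : ℤ) < m := by exact_mod_cast i.2
        have hjb : ((j : ℕ) : ℤ) < m := by exact_mod_cast j.2
        have : ((i : ℕ) : ℤ) = ((j : ℕ) : ℤ) := by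
          rcases lt_trichotomy q 0 with h | h | h
          · have hq1 : q ≤ -1 := by omega
            have := mul_le_mul_of_nonneg_left hq1 (by positivity : (0:ℤ) ≤ (m:ℤ))
            omega
          · rw [h, mul_zero] at hq; omega
          · have hq1 : 1 ≤ q := by omega
            have := mul_le_mul_of_nonneg_left hq1 (by positivity : (0:ℤ) ≤ (m:ℤ))
            omega
        exact Fin.ext (by exact_mod_cast this)
      · rintro ⟨x, k, rfl⟩
        have hr0 : 0 ≤ k % (m : ℤ) := Int.emod_nonneg k (by exact_mod_cast hm0.ne')
        have hrlt : k % (m : ℤ) < m := Int.emod_lt_of_pos k (by exact_mod_cast hm0)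
        refine ⟨⟨(k % (m : ℤ)).toNat, by omega⟩, ?_⟩
        apply Subtype.ext
        show c _ = c k
        rw [hcinj]
        rw [Int.toNat_of_nonneg hr0, Int.emod_def]
        exact ⟨-(k / (m : ℤ)), by ring⟩
    have := Nat.card_eq_of_bijective _ hb
    rw [Nat.card_eq_fintype_card (α := Fin m), Fintype.card_fin] at this
    exact this.symm
  -- choose an eigenvector of the m-th translation inside charSpace χ
  have hχm : χ.comp (σ ^ (-(m : ℤ))).toMonoidHom = χ := hneg _ hcm
  have hmapsTo : ∀ x ∈ charSpace ρA χ, ρ (e (m : ℤ)) x ∈ charSpace ρA χ := by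
    intro x hx
    have h1 := hmap (m : ℤ) χ x hx
    rwa [hχm] at h1
  haveI : Nontrivial (charSpace ρA χ) :=
    nontrivial_of_ne ⟨v, hvχ⟩ 0 (by simp [Subtype.ext_iff, hv0])
  obtain ⟨μ, hμ⟩ := Module.End.exists_eigenvalue
    ((ρ (e (m : ℤ))).restrict hmapsTo)
  obtain ⟨u0, hu0⟩ := hμ.exists_hasEigenvector
  set u : V := (u0 : V) with hu
  have huχ : u ∈ charSpace ρA χ := u0.2
  have hu_ne : u ≠ 0 := by
    simp only [hu, ne_eq, Submodule.coe_eq_zero]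
    exact hu0.right
  have hgu : ρ (e (m : ℤ)) u = μ • u := by
    have h1 := Module.End.mem_eigenspace_iff.mp hu0.1
    have h2 := congrArg (Subtype.val) h1
    simpa [LinearMap.restrict_apply] using h2
  have hinv : ∀ t : ℤ, ∀ x : V, ρ (e (-t)) (ρ (e t) x) = x := by
    intro t x
    have : (ρ (e (-t)) * ρ (e t)) x = x := by
      rw [← map_mul, he_mul, neg_add_cancel, he0, map_one]
      rfl
    exact this
  have hμ0 : μ ≠ 0 := by
    intro h0
    apply hu_ne
    have h1 := hinv (m : ℤ) u
    rw [hgu, h0, zero_smul, map_zero] at h1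
    exact h1.symm
  set w : ℤ → V := fun t => ρ (e t) u with hw
  have hw_shift : ∀ s t : ℤ, ρ (e s) (w t) = w (s + t) := by
    intro s t
    show (ρ (e s) * ρ (e t)) u = _
    rw [← map_mul, he_mul]
  have hw_mem : ∀ t : ℤ, w t ∈ charSpace ρA (c (-t)) := by
    intro t
    exact hmap t χ u huχ
  have hw0 : w 0 = u := by
    show ρ (e 0) u = u
    rw [he0, map_one]
    rfl
  have hw_p : ∀ t : ℤ, w (t + m) = μ • w t := by
    intro t
    rw [← hw_shift t (m : ℤ)]
    show ρ (e t) (ρ (e (m : ℤ)) u) = _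
    rw [hgu, map_smul]
  have hw_ne : ∀ t : ℤ, w t ≠ 0 := by
    intro t h0
    apply hu_ne
    have h1 := hinv t u
    have h2 : ρ (e t) u = 0 := h0
    rw [h2, map_zero] at h1
    exact h1.symm
  set W : Submodule ℂ V := Submodule.span ℂ (Set.range fun i : Fin m => w ((i : ℕ) : ℤ))
    with hW
  have hwW_base : ∀ i : Fin m, w ((i : ℕ) : ℤ) ∈ W := by
    intro i
    exact Submodule.subset_span ⟨i, rfl⟩
  have hWp : ∀ t : ℤ, w t ∈ W → w (t + m) ∈ W := by
    intro t ht
    rw [hw_p]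
    exact W.smul_mem μ ht
  have hWm : ∀ t : ℤ, w t ∈ W → w (t - m) ∈ W := by
    intro t ht
    have h1 : w ((t - m) + m) = μ • w (t - m) := hw_p (t - m)
    rw [sub_add_cancel] at h1
    have h2 : w (t - m) = μ⁻¹ • w t := by
      rw [h1, smul_smul, inv_mul_cancel₀ hμ0, one_smul]
    rw [h2]
    exact W.smul_mem _ ht
  have hWq : ∀ q : ℤ, ∀ t : ℤ, w t ∈ W → w (t + (m : ℤ) * q) ∈ W := by
    intro q
    induction q using Int.induction_on with
    | zero => intro t ht; simpa using ht
    | succ i ih =>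
      intro t ht
      have h : t + (m : ℤ) * ((i : ℤ) + 1) = (t + (m : ℤ) * i) + m := by ring
      rw [h]
      exact hWp _ (ih t ht)
    | pred i ih =>
      intro t ht
      have h : t + (m : ℤ) * (-(i : ℤ) - 1) = (t + (m : ℤ) * (-i)) - m := by ring
      rw [h]
      exact hWm _ (ih t ht)
  have hWall : ∀ t : ℤ, w t ∈ W := by
    intro t
    have hr0 : 0 ≤ t % (m : ℤ) := Int.emod_nonneg t (by exact_mod_cast hm0.ne')
    have hrlt : t % (m : ℤ) < m := Int.emod_lt_of_pos t (by exact_mod_cast hm0)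
    have hbase : w (t % (m : ℤ)) ∈ W := by
      have h1 : (((t % (m : ℤ)).toNat : ℕ) : ℤ) = t % (m : ℤ) := Int.toNat_of_nonneg hr0
      have hlt : (t % (m : ℤ)).toNat < m := by omega
      have := hwW_base ⟨(t % (m : ℤ)).toNat, hlt⟩
      rwa [h1] at this
    have h2 := hWq (t / (m : ℤ)) _ hbase
    rwa [Int.emod_add_mul_ediv t (m : ℤ)] at h2
  have hW_inv : ∀ g, ∀ x ∈ W, ρ g x ∈ W := by
    intro g x hx
    induction hx using Submodule.span_induction with
    | mem x hx =>
      obtain ⟨i, rfl⟩ := hx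
      have hg : inl g.left * e (Multiplicative.toAdd g.right) = g := by
        rw [he]
        simp only [ofAdd_toAdd]
        exact inl_left_mul_inr_right g
      rw [← hg, map_mul]
      show ρ (inl g.left) (ρ (e (Multiplicative.toAdd g.right)) (w ((i : ℕ) : ℤ))) ∈ W
      rw [hw_shift]
      have hmem := hw_mem (Multiplicative.toAdd g.right + ((i : ℕ) : ℤ))
      have heig := hmem g.left
      show ρA g.left _ ∈ W
      rw [heig]
      exact W.smul_mem _ (hWall _)
    | zero => rw [map_zero]; exact W.zero_mem
    | add x y _ _ hx hy => rw [map_add]; exact W.add_mem hx hy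
    | smul c x _ hx => rw [map_smul]; exact W.smul_mem _ hx
  have hWtop : W = ⊤ := by
    rcases hsub W hW_inv with h | h
    · exfalso
      apply hu_ne
      have := hWall 0
      rw [hw0, h] at this
      simpa using this
    · exact h
  -- finrank ≤ m
  have hle : Module.finrank ℂ V ≤ m := by
    have h1 : Module.finrank ℂ V = Module.finrank ℂ W := by
      rw [hWtop, finrank_top]
    rw [h1, hW]
    calc Module.finrank ℂ (Submodule.span ℂ (Set.range fun i : Fin m => w ((i : ℕ) : ℤ)))
        ≤ (Set.range fun i : Fin m => w ((i : ℕ) : ℤ)).toFinset.card :=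
          finrank_span_le_card _
      _ ≤ m := by
          rw [Set.toFinset_range]
          calc (Finset.image (fun i : Fin m => w ((i : ℕ) : ℤ)) Finset.univ).card
              ≤ (Finset.univ : Finset (Fin m)).card := Finset.card_image_le
            _ = m := by simp
  -- m ≤ finrank
  have hge : m ≤ Module.finrank ℂ V := by
    have hinj : Function.Injective (fun i : Fin m => c (-((i : ℕ) : ℤ))) := by
      intro i j hij
      have h2 := (hcinj _ _).mp hij
      have h3 : (m : ℤ) ∣ (((j : ℕ) : ℤ) - ((i : ℕ) : ℤ)) := by
        have : (-((i : ℕ) : ℤ)) - (-((j : ℕ) : ℤ)) = ((j : ℕ) : ℤ) - i := by ring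
        rwa [this] at h2
      obtain ⟨q, hq⟩ := h3
      have hib : ((i : ℕ) : ℤ) < m := by exact_mod_cast i.2
      have hjb : ((j : ℕ) : ℤ) < m := by exact_mod_cast j.2
      have : ((i : ℕ) : ℤ) = ((j : ℕ) : ℤ) := by
        rcases lt_trichotomy q 0 with h | h | h
        · have hq1 : q ≤ -1 := by omega
          have := mul_le_mul_of_nonneg_left hq1 (by positivity : (0:ℤ) ≤ (m:ℤ))
          omega
        · rw [h, mul_zero] at hq; omega
        · have hq1 : 1 ≤ q := by omega
          have := mul_le_mul_of_nonneg_left hq1 (by positivity : (0:ℤ) ≤ (m:ℤ))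
          omega
      exact Fin.ext (by exact_mod_cast this)
    have hli := charSpace_linearIndependent ρA (fun i : Fin m => c (-((i : ℕ) : ℤ)))
      hinj (fun i => w ((i : ℕ) : ℤ)) (fun i => hw_mem _) (fun i => hw_ne _)
    have := hli.fintype_card_le_finrank
    simpa using this
  have hrank : Module.finrank ℂ V = m := le_antisymm hle hge
  refine ⟨⟨χ, ?_, ?_⟩, ?_⟩
  · rw [Submodule.ne_bot_iff]
    exact ⟨v, hvχ, hv0⟩
  · rw [hrank]
    exact hcard.symm
  · intro _
    rw [hrank]
    exact hmdvdn
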